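/- For each k ≥ 0, the number of subgraphs of the complete DAG K_{n+1} that consist of all vertices, have every vertex i ≤ n with out-degree at least 1, have prescribed set S ⊆ {1, ..., n-1} of indices of vertices allowed positive in-degree, and whose total sum of out-degrees is n + k, is the coefficient of x^{n+k} in the product prod_{j=1}^{n} ((x+1)^{seq(S)_j} - 1), where seq(S)_j = 1 + #{s ∈ S : s ≥ n - j} for the appropriate indexing. -/

import Mathlib

set_option maxHeartbeats 1000000


open Polynomial Finset

private def tgt (n : ℕ) (S : Finset ℕ) (a : ℕ) : Finset (Fin (n + 1)) :=
  Finset.univ.filter (fun b => a < (b : ℕ) ∧ ((b : ℕ) = n ∨ (b : ℕ) ∈ S))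

private lemma tgt_card (n : ℕ) (hn : 1 ≤ n) (S : Finset ℕ) (hS : S ⊆ Finset.Icc 1 (n - 1))
    (a : ℕ) (ha : a < n) :
    (tgt n S a).card = 1 + (S.filter (fun s => a + 1 ≤ s)).card := by
  have hb : ∀ m ∈ insert n (S.filter (fun s => a < s)), m < n + 1 := by
    intro m hm
    rcases Finset.mem_insert.1 hm with h | h
    · omega
    · have := hS (Finset.mem_filter.1 h).1
      simp only [Finset.mem_Icc] at this
      omega
  have heq : tgt n S a = Finset.attachFin (insert n (S.filter (fun s => a < s))) hb := by
    ext b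
    simp only [tgt, Finset.mem_filter, Finset.mem_univ, true_and, Finset.mem_attachFin,
      Finset.mem_insert]
    constructor
    · rintro ⟨h1, h2 | h2⟩
      · left; exact h2
      · right; exact ⟨h2, h1⟩
    · rintro (h | ⟨h1, h2⟩)
      · exact ⟨by omega, Or.inl h⟩
      · exact ⟨h2, Or.inr h1⟩
  have hfe : S.filter (fun s => a < s) = S.filter (fun s => a + 1 ≤ s) := by
    apply Finset.filter_congr
    intro s _
    omega
  have hnm : n ∉ S.filter (fun s => a < s) := by
    intro h
    have := hS (Finset.mem_filter.1 h).1
    simp only [Finset.mem_Icc] at this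
    omega
  rw [heq, Finset.card_attachFin, Finset.card_insert_of_notMem hnm, hfe, Nat.add_comm]

private lemma pow_sub_one_eq {α : Type*} [DecidableEq α] (A : Finset α) :
    (X + 1 : Polynomial ℤ) ^ A.card - 1 =
      ∑ T ∈ A.powerset.erase ∅, (X : Polynomial ℤ) ^ T.card := by
  have h1 : ∑ T ∈ A.powerset, (X : Polynomial ℤ) ^ T.card = (X + 1) ^ A.card := by
    rw [← Finset.prod_const, Finset.prod_add]
    refine Finset.sum_congr rfl fun T hT => ?_
    simp [Finset.prod_const]
  have h2 : A.powerset = insert ∅ (A.powerset.erase ∅) := by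
    rw [Finset.insert_erase]
    exact Finset.empty_mem_powerset A
  rw [h2, Finset.sum_insert (Finset.notMem_erase _ _)] at h1
  simp only [Finset.card_empty, pow_zero] at h1
  linear_combination -h1

theorem stmt17 (n k : ℕ) (hn : 1 ≤ n) (S : Finset ℕ) (hS : S ⊆ Finset.Icc 1 (n - 1)) :
    (Nat.card {H : Finset (Fin (n + 1) × Fin (n + 1)) //
        (∀ e ∈ H, e.1 < e.2) ∧
        (∀ v : Fin (n + 1), (v : ℕ) < n → ∃ w, (v, w) ∈ H) ∧
        (∀ e ∈ H, (e.2 : ℕ) = n ∨ (e.2 : ℕ) ∈ S) ∧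
        H.card = n + k} : ℤ) =
      (∏ j ∈ Finset.Icc 1 n,
          ((X + 1 : Polynomial ℤ) ^ (1 + (S.filter (fun s => j ≤ s)).card) - 1)).coeff
        (n + k) := by
  classical
  -- the set of admissible graphs (without the cardinality constraint)
  set 𝒜 : Finset (Finset (Fin (n + 1) × Fin (n + 1))) :=
    Finset.univ.filter (fun H =>
      (∀ e ∈ H, e.1 < e.2) ∧
      (∀ v : Fin (n + 1), (v : ℕ) < n → ∃ w, (v, w) ∈ H) ∧
      (∀ e ∈ H, (e.2 : ℕ) = n ∨ (e.2 : ℕ) ∈ S)) with h𝒜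
  -- choice sets
  set D : Fin n → Finset (Finset (Fin (n + 1))) :=
    fun a => (tgt n S (a : ℕ)).powerset.erase ∅ with hD
  -- Step 1: rewrite the RHS product as a product over `Fin n`
  have hreindex : (∏ j ∈ Finset.Icc 1 n,
        ((X + 1 : Polynomial ℤ) ^ (1 + (S.filter (fun s => j ≤ s)).card) - 1)) =
      ∏ a : Fin n, ((X + 1 : Polynomial ℤ) ^ (tgt n S (a : ℕ)).card - 1) := by
    have h1 : Finset.Icc 1 n = (Finset.range n).image (· + 1) := by
      ext j
      simp only [Finset.mem_Icc, Finset.mem_image, Finset.mem_range]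
      constructor
      · rintro ⟨hj1, hj2⟩; exact ⟨j - 1, by omega, by omega⟩
      · rintro ⟨a, ha, rfl⟩; omega
    rw [h1, Finset.prod_image (by intro x _ y _ h; beta_reduce at h; omega)]
    rw [← Fin.prod_univ_eq_prod_range]
    refine Finset.prod_congr rfl fun a _ => ?_
    rw [tgt_card n hn S hS a a.isLt]
  -- Step 2: the product as a sum over tuples of nonempty subsets
  have hstep2 : (∏ a : Fin n, ((X + 1 : Polynomial ℤ) ^ (tgt n S (a : ℕ)).card - 1)) =
      ∑ p ∈ Fintype.piFinset D, (X : Polynomial ℤ) ^ (∑ a : Fin n, (p a).card) := by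
    have : ∀ a : Fin n, ((X + 1 : Polynomial ℤ) ^ (tgt n S (a : ℕ)).card - 1) =
        ∑ T ∈ D a, (X : Polynomial ℤ) ^ T.card := fun a => pow_sub_one_eq _
    rw [Finset.prod_congr rfl (fun a _ => this a), Finset.prod_univ_sum]
    refine Finset.sum_congr rfl fun p _ => ?_
    rw [Finset.prod_pow_eq_pow_sum]
  -- Step 3: bijection between tuples and graphs
  have hstep3 : (∑ p ∈ Fintype.piFinset D, (X : Polynomial ℤ) ^ (∑ a : Fin n, (p a).card)) =
      ∑ H ∈ 𝒜, (X : Polynomial ℤ) ^ H.card := by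
    refine Finset.sum_nbij'
      (fun p => Finset.univ.biUnion
        (fun a : Fin n => (p a).image (fun b => (a.castSucc, b))))
      (fun H => fun a => (H.filter (fun e => e.1 = a.castSucc)).image Prod.snd)
      ?_ ?_ ?_ ?_ ?_
    · -- maps into 𝒜
      intro p hp
      simp only [Fintype.mem_piFinset, hD, Finset.mem_erase, Finset.mem_powerset] at hp
      simp only [h𝒜, Finset.mem_filter, Finset.mem_univ, true_and]
      refine ⟨?_, ?_, ?_⟩
      · intro e he
        simp only [Finset.mem_biUnion, Finset.mem_univ, true_and, Finset.mem_image] at he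
        obtain ⟨a, b, hb, rfl⟩ := he
        have := (hp a).2 hb
        simp only [tgt, Finset.mem_filter] at this
        exact Fin.lt_def.2 (by simpa using this.2.1)
      · intro v hv
        obtain ⟨b, hb⟩ := Finset.nonempty_iff_ne_empty.2 ((hp ⟨v, hv⟩).1)
        refine ⟨b, ?_⟩
        simp only [Finset.mem_biUnion, Finset.mem_univ, true_and, Finset.mem_image]
        exact ⟨⟨v, hv⟩, b, hb, by simp [Fin.ext_iff]⟩
      · intro e he
        simp only [Finset.mem_biUnion, Finset.mem_univ, true_and, Finset.mem_image] at he
        obtain ⟨a, b, hb, rfl⟩ := he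
        have := (hp a).2 hb
        simp only [tgt, Finset.mem_filter] at this
        exact this.2.2
    · -- maps into piFinset D
      intro H hH
      simp only [h𝒜, Finset.mem_filter, Finset.mem_univ, true_and] at hH
      obtain ⟨h1, h2, h3⟩ := hH
      simp only [Fintype.mem_piFinset, hD, Finset.mem_erase, Finset.mem_powerset]
      intro a
      constructor
      · obtain ⟨w, hw⟩ := h2 a.castSucc (by simpa using a.isLt)
        intro hemp
        have : w ∈ (H.filter (fun e => e.1 = a.castSucc)).image Prod.snd := by
          simp only [Finset.mem_image, Finset.mem_filter]
          exact ⟨(a.castSucc, w), ⟨hw, rfl⟩, rfl⟩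
        rw [hemp] at this
        exact absurd this (Finset.notMem_empty _)
      · intro b hb
        simp only [Finset.mem_image, Finset.mem_filter] at hb
        obtain ⟨e, ⟨heH, he1⟩, rfl⟩ := hb
        simp only [tgt, Finset.mem_filter, Finset.mem_univ, true_and]
        refine ⟨?_, h3 e heH⟩
        have := h1 e heH
        rw [he1] at this
        simpa using Fin.lt_def.1 this
    · -- left inverse
      intro p hp
      simp only [Fintype.mem_piFinset, hD, Finset.mem_erase, Finset.mem_powerset] at hp
      funext a
      ext b
      simp only [Finset.mem_image, Finset.mem_filter, Finset.mem_biUnion, Finset.mem_univ,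
        true_and]
      constructor
      · rintro ⟨e, ⟨⟨a', b', hb', rfl⟩, he1⟩, rfl⟩
        have : a' = a := Fin.castSucc_injective n he1
        subst this
        exact hb'
      · intro hb
        exact ⟨(a.castSucc, b), ⟨⟨a, b, hb, rfl⟩, rfl⟩, rfl⟩
    · -- right inverse
      intro H hH
      simp only [h𝒜, Finset.mem_filter, Finset.mem_univ, true_and] at hH
      obtain ⟨h1, h2, h3⟩ := hH
      ext e
      simp only [Finset.mem_biUnion, Finset.mem_univ, true_and, Finset.mem_image,
        Finset.mem_filter]
      constructor
      · rintro ⟨a, b, ⟨e', ⟨he'H, he'1⟩, rfl⟩, rfl⟩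
        have : e' = (a.castSucc, e'.2) := by rw [← he'1]
        rw [← this]
        exact he'H
      · intro he
        have hlt : (e.1 : ℕ) < n := by
          have := h1 e he
          have h2n : (e.2 : ℕ) ≤ n := Nat.lt_succ_iff.1 e.2.isLt
          have := Fin.lt_def.1 this
          omega
        refine ⟨⟨e.1, hlt⟩, e.2, ⟨e, ⟨he, by simp [Fin.ext_iff]⟩, rfl⟩, ?_⟩
        simp [Fin.ext_iff]
    · -- cardinality compatibility
      intro p hp
      congr 1
      rw [Finset.card_biUnion]
      · refine Finset.sum_congr rfl fun a _ => ?_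
        rw [Finset.card_image_of_injective _ (fun x y h => by simpa using h)]
      · intro a _ a' _ haa'
        apply Finset.disjoint_left.2
        intro e he he'
        simp only [Finset.mem_image] at he he'
        obtain ⟨b, _, rfl⟩ := he
        obtain ⟨b', _, heq⟩ := he'
        exact haa' (Fin.castSucc_injective n (congrArg Prod.fst heq.symm))
  -- Step 4: coefficient extraction
  rw [hreindex, hstep2, hstep3, Polynomial.finset_sum_coeff]
  simp only [Polynomial.coeff_X_pow]
  rw [Finset.sum_boole]
  -- Now LHS : Nat.card of the subtype, RHS : card of filter
  have hcard : Nat.card {H : Finset (Fin (n + 1) × Fin (n + 1)) //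
        (∀ e ∈ H, e.1 < e.2) ∧
        (∀ v : Fin (n + 1), (v : ℕ) < n → ∃ w, (v, w) ∈ H) ∧
        (∀ e ∈ H, (e.2 : ℕ) = n ∨ (e.2 : ℕ) ∈ S) ∧
        H.card = n + k} = (𝒜.filter (fun H => H.card = n + k)).card := by
    rw [Nat.card_eq_fintype_card, Fintype.card_subtype]
    congr 1
    ext H
    simp only [h𝒜, Finset.mem_filter, Finset.mem_univ, true_and]
    tauto
  rw [hcard]
  congr 2
  ext H
  simp only [Finset.mem_filter]
  exact ⟨fun ⟨h1, h2⟩ => ⟨h1, h2.symm⟩, fun ⟨h1, h2⟩ => ⟨h1, h2.symm⟩⟩
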